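/- arXiv:2101.09346 — 3 statements merged into one kernel-verified Lean document; each statement's English description precedes it below -/
import Mathlib

section
/- For any N points x_1,...,x_N on the Stiefel manifold St(d,r), letting x̂ = (1/N)∑ x_i be the Euclidean mean and x̄ ∈ St(d,r) any minimizer of ∑_i ‖y − x_i‖_F² over y ∈ St(d,r), we have (1/2)∑_i ‖x_i − x̄‖_F² ≤ ∑_i ‖x_i − x̂‖_F² ≤ ∑_i ‖x_i − x̄‖_F². -/
open Matrix BigOperators Finset

noncomputable def fnorm {d r : ℕ} (A : Matrix (Fin d) (Fin r) ℝ) : ℝ :=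
  Real.sqrt (∑ i, ∑ j, (A i j) ^ 2)

def ip {d r : ℕ} (A B : Matrix (Fin d) (Fin r) ℝ) : ℝ :=
  ∑ i, ∑ j, A i j * B i j

def Stiefel (d r : ℕ) : Set (Matrix (Fin d) (Fin r) ℝ) :=
  {x | xᵀ * x = 1}

lemma ip_nonneg {d r : ℕ} (A : Matrix (Fin d) (Fin r) ℝ) : 0 ≤ ip A A := by
  unfold ip
  apply Finset.sum_nonneg; intro i _
  apply Finset.sum_nonneg; intro j _
  exact mul_self_nonneg _

lemma fnorm_sq {d r : ℕ} (A : Matrix (Fin d) (Fin r) ℝ) : fnorm A ^ 2 = ip A A := by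
  rw [fnorm, Real.sq_sqrt]
  · simp [ip, sq]
  · apply Finset.sum_nonneg; intro i _
    apply Finset.sum_nonneg; intro j _
    positivity

lemma ip_comm {d r : ℕ} (A B : Matrix (Fin d) (Fin r) ℝ) : ip A B = ip B A := by
  simp [ip, mul_comm]

lemma ip_sub_sub {d r : ℕ} (A B : Matrix (Fin d) (Fin r) ℝ) :
    ip (A - B) (A - B) = ip A A - 2 * ip A B + ip B B := by
  simp only [ip, Matrix.sub_apply, Finset.mul_sum]
  rw [← Finset.sum_sub_distrib, ← Finset.sum_add_distrib]
  apply Finset.sum_congr rfl; intro i _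
  rw [← Finset.sum_sub_distrib, ← Finset.sum_add_distrib]
  apply Finset.sum_congr rfl; intro j _
  ring

lemma ip_sum_left {N d r : ℕ} (f : Fin N → Matrix (Fin d) (Fin r) ℝ)
    (B : Matrix (Fin d) (Fin r) ℝ) : ip (∑ k, f k) B = ∑ k, ip (f k) B := by
  simp only [ip, Matrix.sum_apply, Finset.sum_mul]
  exact Eq.trans (Finset.sum_congr rfl fun i _ => Finset.sum_comm) Finset.sum_comm

lemma ip_smul_left {d r : ℕ} (c : ℝ) (A B : Matrix (Fin d) (Fin r) ℝ) :
    ip (c • A) B = c * ip A B := by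
  simp [ip, Finset.mul_sum, mul_assoc]

lemma ip_smul_right {d r : ℕ} (c : ℝ) (A B : Matrix (Fin d) (Fin r) ℝ) :
    ip A (c • B) = c * ip A B := by
  rw [ip_comm, ip_smul_left, ip_comm]

lemma fnorm_sub_comm {d r : ℕ} (A B : Matrix (Fin d) (Fin r) ℝ) :
    fnorm (A - B) = fnorm (B - A) := by
  unfold fnorm
  congr 1
  apply Finset.sum_congr rfl; intro i _
  apply Finset.sum_congr rfl; intro j _
  simp [Matrix.sub_apply]
  ring

theorem stmt0 {N d r : ℕ} (hN : 0 < N)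
    (x : Fin N → Matrix (Fin d) (Fin r) ℝ) (hx : ∀ i, x i ∈ Stiefel d r)
    (xhat : Matrix (Fin d) (Fin r) ℝ) (hxhat : xhat = ((N : ℝ))⁻¹ • ∑ i, x i)
    (xbar : Matrix (Fin d) (Fin r) ℝ) (hmem : xbar ∈ Stiefel d r)
    (hmin : ∀ y ∈ Stiefel d r,
      ∑ i, fnorm (xbar - x i) ^ 2 ≤ ∑ i, fnorm (y - x i) ^ 2) :
    (1 / 2) * ∑ i, fnorm (x i - xbar) ^ 2 ≤ ∑ i, fnorm (x i - xhat) ^ 2 ∧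
      ∑ i, fnorm (x i - xhat) ^ 2 ≤ ∑ i, fnorm (x i - xbar) ^ 2 := by
  have hNpos : (0:ℝ) < N := by exact_mod_cast hN
  have hNne : (N:ℝ) ≠ 0 := ne_of_gt hNpos
  set S : Matrix (Fin d) (Fin r) ℝ := ∑ i, x i with hS
  set c : ℝ := ∑ i, ip (x i) (x i) with hc
  set s2 : ℝ := ip S S with hs2
  -- key expansion
  have key : ∀ y : Matrix (Fin d) (Fin r) ℝ,
      ∑ i, fnorm (y - x i) ^ 2 = N * ip y y - 2 * ip y S + c := by
    intro y
    have : ∀ i, fnorm (y - x i) ^ 2 = ip y y - 2 * ip y (x i) + ip (x i) (x i) := by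
      intro i; rw [fnorm_sq, ip_sub_sub]
    rw [Finset.sum_congr rfl (fun i _ => this i)]
    rw [Finset.sum_add_distrib, Finset.sum_sub_distrib, ← Finset.mul_sum]
    have h1 : ∑ i : Fin N, ip y (x i) = ip y S := by
      rw [hS, ip_comm, ip_sum_left]
      apply Finset.sum_congr rfl; intro i _; rw [ip_comm]
    rw [h1, ← hc, Finset.sum_const]
    simp [nsmul_eq_mul]
  have hsum_comm : ∀ A, (∑ i, fnorm (x i - A) ^ 2) = ∑ i, fnorm (A - x i) ^ 2 := by
    intro A
    apply Finset.sum_congr rfl; intro i _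
    rw [fnorm_sub_comm]
  -- compute ip's involving xhat
  have hxS : ip xhat S = (N:ℝ)⁻¹ * s2 := by
    rw [hxhat, ip_smul_left, hs2]
  have hxx : ip xhat xhat = (N:ℝ)⁻¹ * ((N:ℝ)⁻¹ * s2) := by
    rw [hxhat, ip_smul_left, ip_smul_right, hs2]
  have h_hat : ∑ i, fnorm (x i - xhat) ^ 2 = c - (N:ℝ)⁻¹ * s2 := by
    rw [hsum_comm, key, hxS, hxx]
    field_simp
    ring
  set a : ℝ := ip xbar xbar with ha
  set b : ℝ := ip xbar S with hb
  have h_bar : ∑ i, fnorm (x i - xbar) ^ 2 = N * a - 2 * b + c := by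
    rw [hsum_comm, key]
  -- second inequality prep
  have hpos2 : 0 ≤ ip (xbar - (N:ℝ)⁻¹ • S) (xbar - (N:ℝ)⁻¹ • S) := ip_nonneg _
  have hexp : ip (xbar - (N:ℝ)⁻¹ • S) (xbar - (N:ℝ)⁻¹ • S)
      = a - 2 * ((N:ℝ)⁻¹ * b) + (N:ℝ)⁻¹ * ((N:ℝ)⁻¹ * s2) := by
    rw [ip_sub_sub, ip_smul_right, ip_smul_left, ip_smul_right, ← ha, ← hb, ← hs2]
  rw [hexp] at hpos2
  have h2 : 0 ≤ (N:ℝ) * a - 2 * b + (N:ℝ)⁻¹ * s2 := by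
    have h := mul_nonneg hNpos.le hpos2
    have heq : (N:ℝ) * (a - 2 * ((N:ℝ)⁻¹ * b) + (N:ℝ)⁻¹ * ((N:ℝ)⁻¹ * s2))
        = (N:ℝ) * a - 2 * b + (N:ℝ)⁻¹ * s2 := by
      field_simp
    linarith [heq ▸ h]
  constructor
  · -- first inequality via averaging
    have hk : ∀ k : Fin N, (N:ℝ) * a - 2 * b + c ≤ (N:ℝ) * ip (x k) (x k) - 2 * ip (x k) S + c := by
      intro k
      have := hmin (x k) (hx k)
      rwa [key xbar, key (x k), ← ha, ← hb] at this
    have hsumk : (N:ℝ) * ((N:ℝ) * a - 2 * b + c) ≤ (N:ℝ) * c - 2 * s2 + (N:ℝ) * c := by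
      have h := Finset.sum_le_sum (fun k (_ : k ∈ Finset.univ) => hk k)
      rw [Finset.sum_const, Finset.card_univ, Fintype.card_fin, nsmul_eq_mul] at h
      rw [Finset.sum_add_distrib, Finset.sum_sub_distrib, ← Finset.mul_sum, ← Finset.mul_sum,
        ← ip_sum_left, ← hS, ← hs2, ← hc, Finset.sum_const, Finset.card_univ,
        Fintype.card_fin, nsmul_eq_mul] at h
      linarith [h]
    have hL : (N:ℝ) * ((N:ℝ) * a - 2 * b + c) ≤ (N:ℝ) * (2 * c - 2 * ((N:ℝ)⁻¹ * s2)) := by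
      have heq : (N:ℝ) * (2 * c - 2 * ((N:ℝ)⁻¹ * s2)) = (N:ℝ) * c - 2 * s2 + (N:ℝ) * c := by
        field_simp; ring
      linarith [hsumk, heq]
    have := le_of_mul_le_mul_left hL hNpos
    rw [h_hat, h_bar]
    linarith
  · rw [h_hat, h_bar]
    linarith
end

section
/- For x ∈ St(d,r), ξ in the tangent space T_x (i.e., xᵀξ + ξᵀx = 0), and any y ∈ St(d,r), the polar retraction Retr_x(ξ) = (x+ξ)(I_r + ξᵀξ)^{-1/2} satisfies ‖Retr_x(ξ) − y‖_F ≤ ‖x + ξ − y‖_F. -/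
open Matrix BigOperators Finset

/- The matrix square root of a positive semidefinite matrix, as defined in Mathlib (Dec 2024),
removed since; restated here with its old definition. -/
open scoped ComplexOrder in
noncomputable def Matrix.PosSemidef.sqrt {n 𝕜 : Type*} [Fintype n] [RCLike 𝕜] [DecidableEq n]
    {A : Matrix n n 𝕜} (hA : A.PosSemidef) : Matrix n n 𝕜 :=
  hA.1.eigenvectorUnitary.1 * diagonal ((↑) ∘ (√·) ∘ hA.1.eigenvalues) *
  (star hA.1.eigenvectorUnitary : Matrix n n 𝕜)

lemma psdSqrt_posSemidef {n : Type*} [Fintype n] [DecidableEq n] {A : Matrix n n ℝ}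
    (hA : A.PosSemidef) : hA.sqrt.PosSemidef := by
  unfold Matrix.PosSemidef.sqrt
  have hd : (diagonal ((↑) ∘ (√·) ∘ hA.1.eigenvalues) : Matrix n n ℝ).PosSemidef :=
    posSemidef_diagonal_iff.mpr fun i => by simpa using Real.sqrt_nonneg (hA.1.eigenvalues i)
  have := hd.mul_mul_conjTranspose_same (hA.1.eigenvectorUnitary : Matrix n n ℝ)
  rwa [← Matrix.star_eq_conjTranspose] at this

lemma psdSqrt_mul_self {n : Type*} [Fintype n] [DecidableEq n] {A : Matrix n n ℝ}
    (hA : A.PosSemidef) : hA.sqrt * hA.sqrt = A := by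
  unfold Matrix.PosSemidef.sqrt
  have hU : (star hA.1.eigenvectorUnitary : Matrix n n ℝ) * hA.1.eigenvectorUnitary.1 = 1 :=
    Unitary.coe_star_mul_self _
  have hDD : (diagonal ((↑) ∘ (√·) ∘ hA.1.eigenvalues) : Matrix n n ℝ) *
      diagonal ((↑) ∘ (√·) ∘ hA.1.eigenvalues) = diagonal (RCLike.ofReal ∘ hA.1.eigenvalues) := by
    rw [diagonal_mul_diagonal]
    congr 1
    funext i
    simpa using Real.mul_self_sqrt (hA.eigenvalues_nonneg i)
  conv_rhs => rw [hA.1.spectral_theorem, Unitary.conjStarAlgAut_apply]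
  calc _ = hA.1.eigenvectorUnitary.1 * (diagonal ((↑) ∘ (√·) ∘ hA.1.eigenvalues) *
        ((star hA.1.eigenvectorUnitary : Matrix n n ℝ) * hA.1.eigenvectorUnitary.1) *
        diagonal ((↑) ∘ (√·) ∘ hA.1.eigenvalues)) * (star hA.1.eigenvectorUnitary : Matrix n n ℝ) := by
          simp only [Matrix.mul_assoc]; rfl
    _ = _ := by rw [hU, Matrix.mul_one, hDD]

lemma auxEntry {d r : ℕ} (B : Matrix (Fin d) (Fin r) ℝ) (j : Fin r) :
    (Bᵀ * B) j j = ∑ i, (B i j) ^ 2 := by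
  simp [Matrix.mul_apply, sq]

lemma auxTrace {d r : ℕ} (B : Matrix (Fin d) (Fin r) ℝ) :
    (Bᵀ * B).trace = ∑ i, ∑ j, (B i j) ^ 2 := by
  rw [Finset.sum_comm]
  simp only [Matrix.trace, Matrix.diag]
  exact Finset.sum_congr rfl fun j _ => auxEntry B j

lemma auxTraceNonneg {d r : ℕ} (B : Matrix (Fin d) (Fin r) ℝ) :
    0 ≤ (Bᵀ * B).trace := by
  rw [auxTrace]
  exact Finset.sum_nonneg fun i _ => Finset.sum_nonneg fun j _ => sq_nonneg _

lemma conjT {m n : Type*} (A : Matrix m n ℝ) : Aᴴ = Aᵀ :=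
  Matrix.conjTranspose_eq_transpose_of_trivial A

lemma keyTrace {d r : ℕ} (y Q : Matrix (Fin d) (Fin r) ℝ)
    (hy : yᵀ * y = 1) (hQ : Qᵀ * Q = 1)
    {P : Matrix (Fin r) (Fin r) ℝ} (hP : P.PosSemidef) :
    (yᵀ * Q * P).trace ≤ P.trace := by
  set R := hP.sqrt with hRdef
  have hR : R.PosSemidef := psdSqrt_posSemidef hP
  have hRt : Rᵀ = R := by rw [← conjT]; exact hR.1
  have hRR : R * R = P := psdSqrt_mul_self hP
  have h1 : yᵀ * Q * P = (yᵀ * (Q * R)) * R := by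
    rw [← hRR, Matrix.mul_assoc, Matrix.mul_assoc, Matrix.mul_assoc]
  have h2 : (yᵀ * Q * P).trace = ((y * R)ᵀ * (Q * R)).trace := by
    rw [h1, Matrix.trace_mul_comm, Matrix.transpose_mul, hRt, Matrix.mul_assoc]
  have hyR : ((y * R)ᵀ * (y * R)) = P := by
    rw [Matrix.transpose_mul, hRt, Matrix.mul_assoc, ← Matrix.mul_assoc yᵀ y R, hy,
      Matrix.one_mul, hRR]
  have hQR : ((Q * R)ᵀ * (Q * R)) = P := by
    rw [Matrix.transpose_mul, hRt, Matrix.mul_assoc, ← Matrix.mul_assoc Qᵀ Q R, hQ,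
      Matrix.one_mul, hRR]
  have hPdiag : ∀ j, 0 ≤ P j j := fun j => by
    have : P = Rᵀ * R := by rw [hRt, hRR]
    rw [this, auxEntry]
    exact Finset.sum_nonneg fun i _ => sq_nonneg _
  rw [h2]
  have h3 : ((y * R)ᵀ * (Q * R)).trace = ∑ j, ∑ i, (y * R) i j * (Q * R) i j := by
    simp only [Matrix.trace, Matrix.diag, Matrix.mul_apply, Matrix.transpose_apply]
  rw [h3]
  have h4 : P.trace = ∑ j, P j j := rfl
  rw [h4]
  refine Finset.sum_le_sum fun j _ => ?_
  have cs := Finset.sum_mul_sq_le_sq_mul_sq Finset.univ (fun i => (y * R) i j)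
    (fun i => (Q * R) i j)
  have e1 : ∑ i, ((y * R) i j) ^ 2 = P j j := by rw [← auxEntry, hyR]
  have e2 : ∑ i, ((Q * R) i j) ^ 2 = P j j := by rw [← auxEntry, hQR]
  rw [e1, e2] at cs
  calc ∑ i, (y * R) i j * (Q * R) i j
      ≤ |∑ i, (y * R) i j * (Q * R) i j| := le_abs_self _
    _ = Real.sqrt ((∑ i, (y * R) i j * (Q * R) i j) ^ 2) := (Real.sqrt_sq_eq_abs _).symm
    _ ≤ Real.sqrt (P j j * P j j) := Real.sqrt_le_sqrt cs
    _ = P j j := Real.sqrt_mul_self (hPdiag j)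

lemma sqrtSubOne {r : ℕ} {P : Matrix (Fin r) (Fin r) ℝ} (hP : P.PosSemidef)
    (h1P : (P - 1).PosSemidef) : (hP.sqrt - 1).PosSemidef := by
  have hev : ∀ i, 1 ≤ hP.1.eigenvalues i := by
    intro i
    set v : Fin r → ℝ := ⇑(hP.1.eigenvectorBasis i) with hvdef
    have hv : P *ᵥ v = hP.1.eigenvalues i • v := hP.1.mulVec_eigenvectorBasis i
    have hstar : star v = v := by
      funext k; exact star_trivial _
    have hvv : dotProduct v v = 1 := by
      have hnorm := hP.1.eigenvectorBasis.orthonormal.1 i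
      have h2 : (inner ℝ (hP.1.eigenvectorBasis i) (hP.1.eigenvectorBasis i) : ℝ) = 1 := by
        rw [real_inner_self_eq_norm_sq, hnorm]; norm_num
      rw [← h2, PiLp.inner_apply]
      simp only [RCLike.inner_apply, starRingEnd_apply, star_trivial, dotProduct]
      rfl
    have h0 := h1P.dotProduct_mulVec_nonneg v
    rw [hstar, Matrix.sub_mulVec, Matrix.one_mulVec, hv, dotProduct_sub,
      dotProduct_smul, hvv] at h0
    simpa using h0
  have hU2 := (Matrix.mem_unitaryGroup_iff).mp (hP.1.eigenvectorUnitary).2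
  set U : Matrix (Fin r) (Fin r) ℝ := (hP.1.eigenvectorUnitary : Matrix (Fin r) (Fin r) ℝ)
    with hUdef
  have hdiag_eq : diagonal ((RCLike.ofReal ∘ Real.sqrt ∘ hP.1.eigenvalues) : Fin r → ℝ) - 1
      = diagonal (fun i => Real.sqrt (hP.1.eigenvalues i) - 1) := by
    rw [← Matrix.diagonal_one, Matrix.diagonal_sub]
    rfl
  have key : hP.sqrt - 1 =
      U * diagonal (fun i => Real.sqrt (hP.1.eigenvalues i) - 1) * star U := by
    calc hP.sqrt - 1
        = U * diagonal ((RCLike.ofReal ∘ Real.sqrt ∘ hP.1.eigenvalues) : Fin r → ℝ) * star U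
            - U * 1 * star U := by
          rw [Matrix.mul_one, hU2, Matrix.PosSemidef.sqrt]
      _ = U * (diagonal ((RCLike.ofReal ∘ Real.sqrt ∘ hP.1.eigenvalues) : Fin r → ℝ) - 1)
            * star U := by rw [← Matrix.sub_mul, ← Matrix.mul_sub]
      _ = U * diagonal (fun i => Real.sqrt (hP.1.eigenvalues i) - 1) * star U := by
          rw [hdiag_eq]
  rw [key]
  have hdiag : (diagonal (fun i => Real.sqrt (hP.1.eigenvalues i) - 1)).PosSemidef := by
    refine Matrix.posSemidef_diagonal_iff.mpr fun i => ?_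
    have : (1:ℝ) ≤ Real.sqrt (hP.1.eigenvalues i) := by
      rw [show (1:ℝ) = Real.sqrt 1 by simp]
      exact Real.sqrt_le_sqrt (hev i)
    linarith
  have := hdiag.mul_mul_conjTranspose_same U
  rwa [← Matrix.star_eq_conjTranspose] at this

theorem stmt3 {d r : ℕ} (x ξ y : Matrix (Fin d) (Fin r) ℝ)
    (hx : x ∈ Stiefel d r) (hy : y ∈ Stiefel d r)
    (hξ : xᵀ * ξ + ξᵀ * x = 0) :
    fnorm ((x + ξ) *
        ((Matrix.PosSemidef.add Matrix.PosSemidef.one (Matrix.posSemidef_conjTranspose_mul_self ξ)).sqrt)⁻¹ - y)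
      ≤ fnorm (x + ξ - y) := by
  have hx' : xᵀ * x = 1 := hx
  have hy' : yᵀ * y = 1 := hy
  set P : Matrix (Fin r) (Fin r) ℝ := 1 + ξᴴ * ξ with hPdef
  have hP : P.PosSemidef :=
    Matrix.PosSemidef.add Matrix.PosSemidef.one (Matrix.posSemidef_conjTranspose_mul_self ξ)
  set S := (Matrix.PosSemidef.add Matrix.PosSemidef.one
    (Matrix.posSemidef_conjTranspose_mul_self ξ)).sqrt with hSdef
  have hSsqrt : S = hP.sqrt := rfl
  set A := x + ξ with hAdef
  have hS : S.PosSemidef := psdSqrt_posSemidef hP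
  have hSt : Sᵀ = S := by rw [← conjT]; exact hS.1
  have hSS : S * S = P := psdSqrt_mul_self hP
  have hAA : Aᵀ * A = P := by
    have e : Aᵀ * A = xᵀ * x + (xᵀ * ξ + ξᵀ * x) + ξᵀ * ξ := by
      rw [hAdef, Matrix.transpose_add, Matrix.add_mul, Matrix.mul_add, Matrix.mul_add]
      abel
    rw [e, hx', hξ, add_zero, hPdef, conjT]
  have hPD : P.PosDef :=
    Matrix.PosDef.add_posSemidef Matrix.PosDef.one (Matrix.posSemidef_conjTranspose_mul_self ξ)
  have hdetS : IsUnit S.det := by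
    have h1 : S.det * S.det = P.det := by rw [← Matrix.det_mul, hSS]
    have h2 : 0 < P.det := hPD.det_pos
    have : S.det ≠ 0 := by
      intro h; rw [h, mul_zero] at h1; linarith
    exact isUnit_iff_ne_zero.mpr this
  have hTS : S⁻¹ * S = 1 := Matrix.nonsing_inv_mul S hdetS
  have hST : S * S⁻¹ = 1 := Matrix.mul_nonsing_inv S hdetS
  have hTt : (S⁻¹)ᵀ = S⁻¹ := by rw [Matrix.transpose_nonsing_inv, hSt]
  set Q := A * S⁻¹ with hQdef
  have hQQ : Qᵀ * Q = 1 := by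
    calc Qᵀ * Q = S⁻¹ * (Aᵀ * A) * S⁻¹ := by
          rw [hQdef, Matrix.transpose_mul, hTt]
          simp only [Matrix.mul_assoc]
      _ = S⁻¹ * (S * (S * S⁻¹)) := by
          rw [hAA, ← hSS]
          simp only [Matrix.mul_assoc]
      _ = 1 := by rw [hST, Matrix.mul_one, hTS]
  have hQS : Q * S = A := by rw [hQdef, Matrix.mul_assoc, hTS, Matrix.mul_one]
  -- the (S - 1) is PSD
  have hP1 : (P - 1).PosSemidef := by
    have : P - 1 = ξᴴ * ξ := by rw [hPdef]; abel
    rw [this]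
    exact Matrix.posSemidef_conjTranspose_mul_self ξ
  have hS1 : (S - 1).PosSemidef := by rw [hSsqrt]; exact sqrtSubOne hP hP1
  -- reduce fnorm goal to traces
  show fnorm (Q - y) ≤ fnorm (A - y)
  unfold fnorm
  apply Real.sqrt_le_sqrt
  rw [← auxTrace, ← auxTrace]
  -- trace computations
  have traQy : (Qᵀ * y).trace = (yᵀ * Q).trace := by
    rw [← Matrix.trace_transpose (Qᵀ * y), Matrix.transpose_mul, Matrix.transpose_transpose]
  have traAy : (Aᵀ * y).trace = (yᵀ * A).trace := by
    rw [← Matrix.trace_transpose (Aᵀ * y), Matrix.transpose_mul, Matrix.transpose_transpose]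
  have tM : ((Q - y)ᵀ * (Q - y)).trace
      = (1 : Matrix (Fin r) (Fin r) ℝ).trace + (1 : Matrix (Fin r) (Fin r) ℝ).trace
        - 2 * (yᵀ * Q).trace := by
    have e : (Q - y)ᵀ * (Q - y) = Qᵀ * Q + yᵀ * y - (Qᵀ * y + yᵀ * Q) := by
      rw [Matrix.transpose_sub, Matrix.sub_mul, Matrix.mul_sub, Matrix.mul_sub]
      abel
    rw [e, hQQ, hy', Matrix.trace_sub, Matrix.trace_add, Matrix.trace_add, traQy]
    ring
  have tN : ((A - y)ᵀ * (A - y)).trace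
      = (S * S).trace + (1 : Matrix (Fin r) (Fin r) ℝ).trace - 2 * (yᵀ * A).trace := by
    have e : (A - y)ᵀ * (A - y) = Aᵀ * A + yᵀ * y - (Aᵀ * y + yᵀ * A) := by
      rw [Matrix.transpose_sub, Matrix.sub_mul, Matrix.mul_sub, Matrix.mul_sub]
      abel
    rw [e, hAA, ← hSS, hy', Matrix.trace_sub, Matrix.trace_add, Matrix.trace_add, traAy]
    ring
  have hyA : (yᵀ * A).trace = (yᵀ * Q * (S - 1)).trace + (yᵀ * Q).trace := by
    have e : yᵀ * Q * (S - 1) = yᵀ * A - yᵀ * Q := by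
      rw [Matrix.mul_sub, Matrix.mul_one, Matrix.mul_assoc, hQS]
    rw [e, Matrix.trace_sub]
    ring
  have hc : (yᵀ * Q * (S - 1)).trace ≤ (S - 1).trace := keyTrace y Q hy' hQQ hS1
  have hS1tr : (S - 1).trace = S.trace - (1 : Matrix (Fin r) (Fin r) ℝ).trace :=
    Matrix.trace_sub S 1
  have hsq : 0 ≤ (S * S).trace - 2 * S.trace + (1 : Matrix (Fin r) (Fin r) ℝ).trace := by
    have e : (S - 1)ᵀ * (S - 1) = S * S - S - S + 1 := by
      rw [Matrix.transpose_sub, Matrix.transpose_one, hSt, Matrix.sub_mul, Matrix.mul_sub,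
        Matrix.mul_sub]
      simp only [Matrix.mul_one, Matrix.one_mul]
      abel
    have h0 := auxTraceNonneg (S - 1)
    rw [e, Matrix.trace_add, Matrix.trace_sub, Matrix.trace_sub] at h0
    linarith
  rw [tM, tN, hyA]
  linarith
end

section
/- Let W ∈ ℝ^{N×N} be symmetric doubly stochastic with eigenvalues in (−1,1] and 1 a simple eigenvalue (graph connected). Set μ = 1 − λ₂(W) and L = 1 − λ_N(W), where λ₂, λ_N are the second largest and smallest eigenvalues. Then for any x ∈ (ℝ^{d×r})^N, with x̂ = (1/N)∑_i x_i, x̂ᵥ = (x̂,...,x̂), and g(x) := ((I_N − W) ⊗ I)x (i.e., g_i = x_i − ∑_j W_{ij}x_j): ⟨x − x̂ᵥ, g(x)⟩ ≥ (μL/(μ+L))‖x − x̂ᵥ‖_F² + (1/(μ+L))‖g(x)‖_F². -/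
open Matrix BigOperators Finset
open scoped RealInnerProductSpace

lemma key_vec {N : ℕ} (W : Matrix (Fin N) (Fin N) ℝ)
    (hsymm : W.IsSymm) (hrow : ∀ i, ∑ j, W i j = 1)
    (lam2 lamN : ℝ)
    (hlam2 : IsGreatest {t : ℝ | ∃ v : Fin N → ℝ, v ≠ 0 ∧ (∑ i, v i) = 0 ∧ W.mulVec v = t • v} lam2)
    (hlamN : IsLeast {t : ℝ | ∃ v : Fin N → ℝ, v ≠ 0 ∧ W.mulVec v = t • v} lamN)
    (hconn : lam2 < 1)
    (v : Fin N → ℝ) (hv : ∑ i, v i = 0) :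
    ((1-lam2)+(1-lamN)) * (∑ i, v i * (v i - W.mulVec v i))
      ≥ (1-lam2)*(1-lamN) * (∑ i, (v i)^2) + ∑ i, (v i - W.mulVec v i)^2 := by
  have hA : W.IsHermitian := by rw [Matrix.IsHermitian, conjTranspose]; ext i j; simpa using congrFun (congrFun hsymm i) j
  set B := hA.eigenvectorBasis with hB
  set t := hA.eigenvalues with ht
  have hcol : ∀ j, ∑ i, W i j = 1 := by
    intro j
    calc ∑ i, W i j = ∑ i, W j i := by
          refine Finset.sum_congr rfl fun i _ => ?_
          exact (congrFun (congrFun hsymm j) i)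
      _ = 1 := hrow j
  have hsumW : ∀ w : Fin N → ℝ, ∑ i, (W *ᵥ w) i = ∑ j, w j := by
    intro w
    simp only [mulVec, dotProduct]
    rw [Finset.sum_comm]
    refine Finset.sum_congr rfl fun j _ => ?_
    rw [← Finset.sum_mul, hcol j, one_mul]
  have hWB : ∀ k, W *ᵥ ⇑(B k) = t k • ⇑(B k) := fun k => hA.mulVec_eigenvectorBasis k
  have hWBi : ∀ k i, ∑ j, W i j * B k j = t k * B k i := by
    intro k i
    exact congrFun (hWB k) i
  have hBne : ∀ k, (⇑(B k) : Fin N → ℝ) ≠ 0 := by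
    intro k h
    exact B.orthonormal.ne_zero k (by ext i; exact congrFun h i)
  have htN : ∀ k, lamN ≤ t k := fun k => hlamN.2 ⟨⇑(B k), hBne k, hWB k⟩
  set ev : EuclideanSpace ℝ (Fin N) := (WithLp.equiv 2 _).symm v with hev
  set u : Fin N → ℝ := fun i => v i - W.mulVec v i with hu
  set eu : EuclideanSpace ℝ (Fin N) := (WithLp.equiv 2 _).symm u with heu
  set c : Fin N → ℝ := fun k => ⟪(B k : EuclideanSpace ℝ (Fin N)), ev⟫ with hc
  have hinner : ∀ x y : EuclideanSpace ℝ (Fin N), ⟪x, y⟫ = ∑ i, x i * y i := by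
    intro x y; simp [PiLp.inner_apply]; exact Finset.sum_congr rfl fun i _ => mul_comm _ _
  have hck : ∀ k, c k = ∑ i, B k i * v i := fun k => hinner _ _
  have hcfold : ∀ k, ⟪(B k : EuclideanSpace ℝ (Fin N)), ev⟫ = c k := fun k => rfl
  -- if t k = 1 then c k = 0
  have hone : ∀ k, t k = 1 → c k = 0 := by
    intro k htk
    have hNpos : (0:ℝ) < N := by
      have : Nonempty (Fin N) := ⟨k⟩
      exact_mod_cast Nat.pos_of_ne_zero (by rintro rfl; exact (IsEmpty.false k))
    set a : ℝ := (∑ i, B k i) / N with ha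
    set w : Fin N → ℝ := fun i => B k i - a with hw
    have hWw : W *ᵥ w = (1:ℝ) • w := by
      funext i
      have h1 : (W *ᵥ w) i = (∑ j, W i j * B k j) - a := by
        simp only [mulVec, dotProduct, hw, mul_sub, Finset.sum_sub_distrib]
        rw [← Finset.sum_mul, hrow i, one_mul]
      rw [h1, hWBi k i, htk, one_mul]
      simp [hw]
    have hsw : ∑ i, w i = 0 := by
      simp only [hw, Finset.sum_sub_distrib, Finset.sum_const, Finset.card_univ,
        Fintype.card_fin, nsmul_eq_mul, ha]
      field_simp
      ring
    have hw0 : w = 0 := by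
      by_contra hne
      have := hlam2.2 ⟨w, hne, hsw, hWw⟩
      linarith
    have hconst : ∀ i, B k i = a := by
      intro i
      have := congrFun hw0 i
      simp only [hw, Pi.zero_apply] at this
      linarith
    rw [hck]
    calc ∑ i, B k i * v i = ∑ i, a * v i := by
          refine Finset.sum_congr rfl fun i _ => by rw [hconst i]
      _ = a * ∑ i, v i := by rw [Finset.mul_sum]
      _ = 0 := by rw [hv, mul_zero]
  -- if t k ≠ 1 then t k ≤ lam2
  have htwo : ∀ k, t k ≠ 1 → t k ≤ lam2 := by
    intro k htk
    have h1 : ∑ i, (W *ᵥ ⇑(B k)) i = ∑ i, B k i := hsumW _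
    have h2 : ∑ i, (W *ᵥ ⇑(B k)) i = t k * ∑ i, B k i := by
      rw [hWB k]; simp [Finset.mul_sum]
    have h3 : (1 - t k) * (∑ i, B k i) = 0 := by rw [sub_mul, one_mul, ← h2, h1, sub_self]
    have hsum0 : ∑ i, B k i = 0 := by
      rcases mul_eq_zero.1 h3 with h | h
      · exact absurd (by linarith [sub_eq_zero.1 h] : t k = 1) htk
      · exact h
    exact hlam2.2 ⟨⇑(B k), hBne k, hsum0, hWB k⟩
  -- ⟪B k, eu⟫ = (1 - t k) * c k
  have hcu : ∀ k, ⟪(B k : EuclideanSpace ℝ (Fin N)), eu⟫ = (1 - t k) * c k := by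
    intro k
    have hWv : ∑ i, B k i * (W *ᵥ v) i = t k * ∑ i, B k i * v i := by
      have h1 : ∀ i, (W *ᵥ v) i = ∑ j, W i j * v j := fun i => rfl
      calc ∑ i, B k i * (W *ᵥ v) i = ∑ i, ∑ j, B k i * (W i j * v j) := by
            simp only [h1, Finset.mul_sum]
        _ = ∑ j, ∑ i, B k i * (W i j * v j) := Finset.sum_comm
        _ = ∑ j, (∑ i, W j i * B k i) * v j := by
            refine Finset.sum_congr rfl fun j _ => ?_
            rw [Finset.sum_mul]
            refine Finset.sum_congr rfl fun i _ => ?_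
            have hs : W i j = W j i := (congrFun (congrFun hsymm i) j).symm
            rw [hs]; ring
        _ = ∑ j, (t k * B k j) * v j := by
            refine Finset.sum_congr rfl fun j _ => by rw [hWBi k j]
        _ = t k * ∑ j, B k j * v j := by
            rw [Finset.mul_sum]
            exact Finset.sum_congr rfl fun j _ => by ring
    have h0 : ⟪(B k : EuclideanSpace ℝ (Fin N)), eu⟫ = ∑ i, B k i * u i := hinner _ _
    rw [h0, hck]
    calc ∑ i, B k i * u i = ∑ i, (B k i * v i - B k i * (W *ᵥ v) i) := by
          refine Finset.sum_congr rfl fun i _ => ?_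
          simp only [hu, mul_sub]
      _ = (∑ i, B k i * v i) - ∑ i, B k i * (W *ᵥ v) i := Finset.sum_sub_distrib _ _
      _ = (∑ i, B k i * v i) - t k * ∑ i, B k i * v i := by rw [hWv]
      _ = (1 - t k) * ∑ i, B k i * v i := by ring
  -- Parseval
  have hP1 : ∑ i, v i * u i = ∑ k, c k * ((1 - t k) * c k) := by
    have h : ∑ k, ⟪ev, (B k : EuclideanSpace ℝ (Fin N))⟫ * ⟪(B k : EuclideanSpace ℝ (Fin N)), eu⟫
        = ∑ i, v i * u i := (B.sum_inner_mul_inner ev eu).trans (hinner ev eu)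
    rw [← h]
    refine Finset.sum_congr rfl fun k _ => ?_
    rw [real_inner_comm (B k) ev, hcu k, hcfold k]
  have hP2 : ∑ i, (v i)^2 = ∑ k, (c k)^2 := by
    have h : ∑ k, ⟪ev, (B k : EuclideanSpace ℝ (Fin N))⟫ * ⟪(B k : EuclideanSpace ℝ (Fin N)), ev⟫
        = ∑ i, v i * v i := (B.sum_inner_mul_inner ev ev).trans (hinner ev ev)
    calc ∑ i, (v i)^2 = ∑ i, v i * v i := by
          exact Finset.sum_congr rfl fun i _ => pow_two (v i)
      _ = ∑ k, ⟪ev, (B k : EuclideanSpace ℝ (Fin N))⟫ * ⟪(B k : EuclideanSpace ℝ (Fin N)), ev⟫ := h.symm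
      _ = ∑ k, (c k)^2 := by
          refine Finset.sum_congr rfl fun k _ => ?_
          rw [real_inner_comm (B k) ev, hcfold k, pow_two]
  have hP3 : ∑ i, (u i)^2 = ∑ k, ((1 - t k) * c k)^2 := by
    have h : ∑ k, ⟪eu, (B k : EuclideanSpace ℝ (Fin N))⟫ * ⟪(B k : EuclideanSpace ℝ (Fin N)), eu⟫
        = ∑ i, u i * u i := (B.sum_inner_mul_inner eu eu).trans (hinner eu eu)
    calc ∑ i, (u i)^2 = ∑ i, u i * u i := Finset.sum_congr rfl fun i _ => pow_two (u i)
      _ = ∑ k, ⟪eu, (B k : EuclideanSpace ℝ (Fin N))⟫ * ⟪(B k : EuclideanSpace ℝ (Fin N)), eu⟫ := h.symm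
      _ = ∑ k, ((1 - t k) * c k)^2 := by
          refine Finset.sum_congr rfl fun k _ => ?_
          rw [real_inner_comm (B k) eu, hcu k, pow_two]
  -- rewrite goal in terms of u and conclude
  have hgu : ∀ i, v i - W.mulVec v i = u i := fun i => rfl
  simp only [hgu]
  rw [hP1, hP2, hP3, ge_iff_le, Finset.mul_sum, Finset.mul_sum,
    ← Finset.sum_add_distrib]
  refine Finset.sum_le_sum fun k _ => ?_
  by_cases hc0 : c k = 0
  · simp [hc0]
  · have h2 : t k ≤ lam2 := by
      by_cases h : t k = 1
      · exact absurd (hone k h) hc0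
      · exact htwo k h
    have hN' := htN k
    nlinarith [sq_nonneg (c k), mul_nonneg (mul_nonneg (sq_nonneg (c k))
      (sub_nonneg.2 h2)) (sub_nonneg.2 hN')]

theorem stmt9 {N d r : ℕ} (hN : 0 < N) (W : Matrix (Fin N) (Fin N) ℝ)
    (hsymm : W.IsSymm) (hnn : ∀ i j, 0 ≤ W i j) (hrow : ∀ i, ∑ j, W i j = 1)
    (heig : ∀ t : ℝ, (∃ v : Fin N → ℝ, v ≠ 0 ∧ W.mulVec v = t • v) → -1 < t ∧ t ≤ 1)
    (lam2 lamN : ℝ)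
    (hlam2 : IsGreatest
      {t : ℝ | ∃ v : Fin N → ℝ, v ≠ 0 ∧ (∑ i, v i) = 0 ∧ W.mulVec v = t • v} lam2)
    (hlamN : IsLeast {t : ℝ | ∃ v : Fin N → ℝ, v ≠ 0 ∧ W.mulVec v = t • v} lamN)
    (hconn : lam2 < 1)
    (x : Fin N → Matrix (Fin d) (Fin r) ℝ)
    (xhat : Matrix (Fin d) (Fin r) ℝ) (hxhat : xhat = ((N : ℝ))⁻¹ • ∑ i, x i)
    (g : Fin N → Matrix (Fin d) (Fin r) ℝ)
    (hg : ∀ i, g i = x i - ∑ j, W i j • x j) :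
    ∑ i, ip (x i - xhat) (g i) ≥
      ((1 - lam2) * (1 - lamN) / ((1 - lam2) + (1 - lamN))) * ∑ i, fnorm (x i - xhat) ^ 2
        + (1 / ((1 - lam2) + (1 - lamN))) * ∑ i, fnorm (g i) ^ 2 := by
  have hμ : 0 < 1 - lam2 := by linarith
  have hlamN2 : lamN ≤ lam2 := by
    obtain ⟨v0, hv0, hsum0, heig0⟩ := hlam2.1
    exact hlamN.2 ⟨v0, hv0, heig0⟩
  have hL : 0 < 1 - lamN := by linarith
  have hden : 0 < (1 - lam2) + (1 - lamN) := by linarith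
  have hNz : (N:ℝ) ≠ 0 := Nat.cast_ne_zero.mpr hN.ne'
  -- per-entry key inequality
  have key : ∀ (a : Fin d) (b : Fin r),
      ((1-lam2)+(1-lamN)) * (∑ i, (x i - xhat) a b * g i a b) ≥
        (1-lam2)*(1-lamN) * (∑ i, ((x i - xhat) a b)^2) + ∑ i, (g i a b)^2 := by
    intro a b
    have hsum0 : ∑ i, ((x i - xhat) a b) = 0 := by
      have h1 : ∑ i, ((x i - xhat) a b) = (∑ i, x i a b) - N * xhat a b := by
        simp [Matrix.sub_apply, Finset.sum_sub_distrib, Finset.card_univ]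
      rw [h1, hxhat]
      simp only [Matrix.smul_apply, Matrix.sum_apply, smul_eq_mul]
      field_simp
      ring
    have hkv := key_vec W hsymm hrow lam2 lamN hlam2 hlamN hconn
      (fun i => (x i - xhat) a b) hsum0
    have hgv : ∀ i, (x i - xhat) a b - W.mulVec (fun i => (x i - xhat) a b) i = g i a b := by
      intro i
      have h2 : ∑ j, W i j * ((x j - xhat) a b) = (∑ j, W i j * x j a b) - xhat a b := by
        simp only [Matrix.sub_apply, mul_sub]
        rw [Finset.sum_sub_distrib, ← Finset.sum_mul, hrow i, one_mul]
      have h3 : g i a b = x i a b - ∑ j, W i j * x j a b := by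
        rw [hg i]
        simp [Matrix.sub_apply, Matrix.sum_apply, Matrix.smul_apply, smul_eq_mul]
      have h4 : W.mulVec (fun i => (x i - xhat) a b) i = ∑ j, W i j * ((x j - xhat) a b) := rfl
      rw [h4, h2, h3]
      simp [Matrix.sub_apply]
    simp only [hgv] at hkv
    exact hkv
  -- rewrite the three global sums as triple sums
  have hfn : ∀ (A : Matrix (Fin d) (Fin r) ℝ), fnorm A ^ 2 = ∑ a, ∑ b, (A a b)^2 := by
    intro A
    simp only [fnorm]
    rw [Real.sq_sqrt]
    positivity
  have e1 : ∑ i, ip (x i - xhat) (g i) = ∑ a, ∑ b, ∑ i, (x i - xhat) a b * g i a b := by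
    simp only [ip]
    rw [Finset.sum_comm]
    exact Finset.sum_congr rfl fun a _ => Finset.sum_comm
  have e2 : ∑ i, fnorm (x i - xhat) ^ 2 = ∑ a, ∑ b, ∑ i, ((x i - xhat) a b)^2 := by
    simp only [hfn]
    rw [Finset.sum_comm]
    exact Finset.sum_congr rfl fun a _ => Finset.sum_comm
  have e3 : ∑ i, fnorm (g i) ^ 2 = ∑ a, ∑ b, ∑ i, (g i a b)^2 := by
    simp only [hfn]
    rw [Finset.sum_comm]
    exact Finset.sum_congr rfl fun a _ => Finset.sum_comm
  -- summed key inequality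
  have H : ((1-lam2)+(1-lamN)) * (∑ a, ∑ b, ∑ i, (x i - xhat) a b * g i a b) ≥
      (1-lam2)*(1-lamN) * (∑ a, ∑ b, ∑ i, ((x i - xhat) a b)^2)
        + ∑ a, ∑ b, ∑ i, (g i a b)^2 := by
    rw [ge_iff_le, Finset.mul_sum, Finset.mul_sum, ← Finset.sum_add_distrib]
    refine Finset.sum_le_sum fun a _ => ?_
    rw [Finset.mul_sum, Finset.mul_sum, ← Finset.sum_add_distrib]
    exact Finset.sum_le_sum fun b _ => key a b
  rw [ge_iff_le, e1, e2, e3]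
  rw [div_mul_eq_mul_div, one_div, inv_mul_eq_div, ← add_div, div_le_iff₀ hden]
  calc (1-lam2)*(1-lamN) * (∑ a, ∑ b, ∑ i, ((x i - xhat) a b)^2)
        + ∑ a, ∑ b, ∑ i, (g i a b)^2
      ≤ ((1-lam2)+(1-lamN)) * (∑ a, ∑ b, ∑ i, (x i - xhat) a b * g i a b) := H
    _ = (∑ a, ∑ b, ∑ i, (x i - xhat) a b * g i a b) * ((1-lam2)+(1-lamN)) := by ring
end
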